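/- Let φ be a nondegenerate Bernstein function with extension φ(z) to Re z ≥ 0. Then for every z = a + i b with a > 0, the series ∑_{k=1}^∞ | (φ(k + a + i b)/φ(k + a)) · e^{−i b φ'(k)/φ(k)} − 1 | converges; consequently the infinite product ∏_{k=1}^∞ φ(k + a)/|φ(k + a + i b)| converges to a strictly positive real number. (Paper: core of the proof that the generalized Weierstrass product W_φ is absolutely convergent on the right half-plane, Theorem 'prop:FormMellin1', item (2).) -/

import Mathlib

open MeasureTheory Complex Filter

namespace BWP

noncomputable def phiR (m σ2 : ℝ) (μ : Measure ℝ) (x : ℝ) : ℝ :=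
  m + σ2 * x + ∫ y, (1 - Real.exp (-(x * y))) ∂μ

noncomputable def phiD (σ2 : ℝ) (μ : Measure ℝ) (x : ℝ) : ℝ :=
  σ2 + ∫ y, y * Real.exp (-(x * y)) ∂μ

section
variable {m σ2 : ℝ} {μ : Measure ℝ}

lemma ae_pos (hμ0 : μ (Set.Iic 0) = 0) : ∀ᵐ y ∂μ, 0 < y := by
  rw [ae_iff]
  convert hμ0 using 2
  ext y; simp [not_lt]

lemma integrable_dom {E : Type*} [NormedAddCommGroup E]
    (hμ0 : μ (Set.Iic 0) = 0) (hμint : Integrable (fun y : ℝ => min 1 y) μ)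
    {f : ℝ → E} (hf : AEStronglyMeasurable f μ) {C : ℝ}
    (h : ∀ y : ℝ, 0 < y → ‖f y‖ ≤ C * min 1 y) : Integrable f μ := by
  refine (hμint.const_mul C).mono' hf ?_
  filter_upwards [ae_pos hμ0] with y hy using h y hy

-- elementary bounds
lemma norm_one_sub_exp_le_two {w : ℂ} (hw : 0 ≤ w.re) : ‖1 - Complex.exp (-w)‖ ≤ 2 := by
  have h1 : ‖Complex.exp (-w)‖ ≤ 1 := by
    rw [Complex.norm_exp]
    simp only [Complex.neg_re]
    exact Real.exp_le_one_iff.2 (by linarith)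
  calc ‖1 - Complex.exp (-w)‖ ≤ ‖(1 : ℂ)‖ + ‖Complex.exp (-w)‖ := norm_sub_le _ _
  _ ≤ 2 := by simp at h1 ⊢; linarith

lemma norm_one_sub_exp_le_norm {w : ℂ} (hw : 0 ≤ w.re) :
    ‖1 - Complex.exp (-w)‖ ≤ 2 * ‖w‖ := by
  rcases le_or_gt ‖w‖ 1 with h | h
  · have := Complex.norm_exp_sub_one_le (x := -w) (by simpa using h)
    calc ‖1 - Complex.exp (-w)‖ = ‖Complex.exp (-w) - 1‖ := by rw [norm_sub_rev]
    _ ≤ 2 * ‖-w‖ := this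
    _ = 2 * ‖w‖ := by rw [norm_neg]
  · calc ‖1 - Complex.exp (-w)‖ ≤ 2 := norm_one_sub_exp_le_two hw
    _ ≤ 2 * ‖w‖ := by nlinarith

lemma key1a {t : ℝ} (h : |t| ≤ 1) : ‖Complex.exp (t * I) - 1 - t * I‖ ≤ t ^ 2 := by
  have hn : ‖(t : ℂ) * I‖ = |t| := by simp
  have := Complex.norm_exp_sub_one_sub_id_le (x := t * I) (by rw [hn]; exact h)
  calc ‖Complex.exp (t * I) - 1 - t * I‖ ≤ ‖(t:ℂ) * I‖ ^ 2 := this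
  _ = t ^ 2 := by rw [hn, _root_.sq_abs]

lemma key1b (t : ℝ) : ‖Complex.exp (t * I) - 1 - t * I‖ ≤ 2 + |t| := by
  have hn : ‖(t : ℂ) * I‖ = |t| := by simp
  have h1 : ‖Complex.exp ((t:ℂ) * I)‖ = 1 := by
    rw [Complex.norm_exp]; simp
  calc ‖Complex.exp (t * I) - 1 - t * I‖
      ≤ ‖Complex.exp ((t:ℂ) * I) - 1‖ + ‖(t:ℂ) * I‖ := norm_sub_le _ _
  _ ≤ (‖Complex.exp ((t:ℂ) * I)‖ + ‖(1:ℂ)‖) + |t| := by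
        gcongr
        · exact norm_sub_le _ _
        · rw [hn]
  _ = 2 + |t| := by rw [h1]; simp; ring


lemma one_sub_exp_le_one {t : ℝ} : 1 - Real.exp (-t) ≤ 1 := by
  have := Real.exp_nonneg (-t); linarith

lemma one_sub_exp_le_self {t : ℝ} : 1 - Real.exp (-t) ≤ t := by
  have := Real.add_one_le_exp (-t); linarith

lemma exp_mul_self_le_inv {x y : ℝ} (hx : 0 < x) (hy : 0 ≤ y) :
    y * Real.exp (-(x * y)) ≤ 1 / x := by
  have h1 : x * y ≤ Real.exp (x * y) := by nlinarith [Real.add_one_le_exp (x * y)]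
  have h2 : (0:ℝ) < Real.exp (x * y) := Real.exp_pos _
  rw [Real.exp_neg, le_div_iff₀ hx]
  calc y * (Real.exp (x*y))⁻¹ * x = (x*y) * (Real.exp (x*y))⁻¹ := by ring
  _ ≤ Real.exp (x*y) * (Real.exp (x*y))⁻¹ := by gcongr
  _ = 1 := mul_inv_cancel₀ (ne_of_gt h2)

lemma intR1 (hμ0 : μ (Set.Iic 0) = 0) (hμint : Integrable (fun y : ℝ => min 1 y) μ)
    {x : ℝ} (hx : 0 < x) : Integrable (fun y : ℝ => 1 - Real.exp (-(x * y))) μ := by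
  refine integrable_dom hμ0 hμint ((by fun_prop : Continuous _).aestronglyMeasurable) (C := max 1 x) (fun y hy => ?_)
  have h0 : 0 ≤ 1 - Real.exp (-(x * y)) := by
    have : Real.exp (-(x*y)) ≤ 1 := Real.exp_le_one_iff.2 (by nlinarith)
    linarith
  rw [Real.norm_eq_abs, _root_.abs_of_nonneg h0]
  rcases le_or_gt y 1 with h | h
  · calc 1 - Real.exp (-(x*y)) ≤ x * y := by
          have := one_sub_exp_le_self (t := x*y); linarith
    _ ≤ max 1 x * min 1 y := by
        rw [min_eq_right h]
        exact mul_le_mul (le_max_right _ _) le_rfl hy.le (le_trans zero_le_one (le_max_left _ _))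
  · calc 1 - Real.exp (-(x*y)) ≤ 1 := one_sub_exp_le_one
    _ ≤ max 1 x * min 1 y := by
        rw [min_eq_left h.le]
        simpa using le_max_left 1 x


lemma intC1 (hμ0 : μ (Set.Iic 0) = 0) (hμint : Integrable (fun y : ℝ => min 1 y) μ)
    {z : ℂ} (hz : 0 ≤ z.re) : Integrable (fun y : ℝ => 1 - Complex.exp (-(z * y))) μ := by
  refine integrable_dom hμ0 hμint ((by fun_prop : Continuous _).aestronglyMeasurable) (C := 2 * max 1 ‖z‖) (fun y hy => ?_)
  have hre : 0 ≤ (z * (y:ℂ)).re := by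
    rw [Complex.mul_re]; simp [Complex.ofReal_re, Complex.ofReal_im]
    positivity
  have hnw : ‖z * (y:ℂ)‖ = ‖z‖ * y := by
    rw [norm_mul, Complex.norm_real, Real.norm_eq_abs, abs_of_pos hy]
  rcases le_or_gt y 1 with h | h
  · calc ‖1 - Complex.exp (-(z * y))‖ ≤ 2 * ‖z * (y:ℂ)‖ := norm_one_sub_exp_le_norm hre
    _ = 2 * ‖z‖ * y := by rw [hnw]; ring
    _ ≤ 2 * max 1 ‖z‖ * min 1 y := by
        rw [min_eq_right h]
        have : ‖z‖ ≤ max 1 ‖z‖ := le_max_right _ _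
        nlinarith [hy.le]
  · calc ‖1 - Complex.exp (-(z * y))‖ ≤ 2 := norm_one_sub_exp_le_two hre
    _ ≤ 2 * max 1 ‖z‖ * min 1 y := by
        rw [min_eq_left h.le]
        nlinarith [le_max_left 1 ‖z‖]

lemma intR2 (hμ0 : μ (Set.Iic 0) = 0) (hμint : Integrable (fun y : ℝ => min 1 y) μ)
    {x : ℝ} (hx : 0 < x) : Integrable (fun y : ℝ => y * Real.exp (-(x * y))) μ := by
  refine integrable_dom hμ0 hμint ((by fun_prop : Continuous _).aestronglyMeasurable) (C := 1 + 1/x) (fun y hy => ?_)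
  have h0 : 0 ≤ y * Real.exp (-(x * y)) := by positivity
  rw [Real.norm_eq_abs, _root_.abs_of_nonneg h0]
  rcases le_or_gt y 1 with h | h
  · have he : Real.exp (-(x*y)) ≤ 1 := Real.exp_le_one_iff.2 (by nlinarith)
    calc y * Real.exp (-(x*y)) ≤ y * 1 := by gcongr
    _ = y := mul_one y
    _ ≤ (1 + 1/x) * min 1 y := by
        rw [min_eq_right h]
        nlinarith [one_div_pos.2 hx, hy.le]
  · calc y * Real.exp (-(x*y)) ≤ 1 / x := exp_mul_self_le_inv hx hy.le
    _ ≤ (1 + 1/x) * min 1 y := by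
        rw [min_eq_left h.le]
        nlinarith [one_div_pos.2 hx]

lemma intC2 (hμ0 : μ (Set.Iic 0) = 0) (hμint : Integrable (fun y : ℝ => min 1 y) μ)
    {x : ℝ} (hx : 0 < x) :
    Integrable (fun y : ℝ => (y:ℂ) * Complex.exp (-((x:ℂ) * y))) μ := by
  have h := intR2 hμ0 hμint hx
  have : (fun y : ℝ => (y:ℂ) * Complex.exp (-((x:ℂ) * y)))
      = fun y : ℝ => ((y * Real.exp (-(x * y)) : ℝ) : ℂ) := by
    funext y; push_cast [Complex.ofReal_exp]; ring_nf
  rw [this]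
  exact h.ofReal


lemma bound2 {c y : ℝ} (hc : 0 < c) (hy : 0 < y) :
    y * Real.exp (-(c * y)) ≤ (1 + 1/c) * min 1 y := by
  rcases le_or_gt y 1 with h | h
  · have he : Real.exp (-(c*y)) ≤ 1 := Real.exp_le_one_iff.2 (by nlinarith)
    calc y * Real.exp (-(c*y)) ≤ y * 1 := by gcongr
    _ = y := mul_one y
    _ ≤ (1 + 1/c) * min 1 y := by
        rw [min_eq_right h]
        nlinarith [one_div_pos.2 hc, hy.le]
  · calc y * Real.exp (-(c*y)) ≤ 1 / c := exp_mul_self_le_inv hc hy.le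
    _ ≤ (1 + 1/c) * min 1 y := by
        rw [min_eq_left h.le]
        nlinarith [one_div_pos.2 hc]

lemma cexp_ofReal (x y : ℝ) :
    (1 : ℂ) - Complex.exp (-((x:ℂ) * y)) = ((1 - Real.exp (-(x * y)) : ℝ) : ℂ) := by
  push_cast [Complex.ofReal_exp]
  norm_num

lemma intgl_ofReal_eq (x : ℝ) :
    (∫ y, (1 - Complex.exp (-((x:ℂ) * y))) ∂μ)
      = ((∫ y, (1 - Real.exp (-(x * y))) ∂μ : ℝ) : ℂ) := by
  calc ∫ y, (1 - Complex.exp (-((x:ℂ) * y))) ∂μ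
      = ∫ y, ((1 - Real.exp (-(x * y)) : ℝ) : ℂ) ∂μ := by
        congr 1; funext y; exact cexp_ofReal x y
  _ = _ := integral_ofReal

lemma intgl2_ofReal_eq (x : ℝ) :
    (∫ y, ((y:ℂ) * Complex.exp (-((x:ℂ) * y))) ∂μ)
      = ((∫ y, (y * Real.exp (-(x * y))) ∂μ : ℝ) : ℂ) := by
  calc ∫ y, ((y:ℂ) * Complex.exp (-((x:ℂ) * y))) ∂μ
      = ∫ y, ((y * Real.exp (-(x * y)) : ℝ) : ℂ) ∂μ := by
        congr 1; funext y; push_cast [Complex.ofReal_exp]; ring_nf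
  _ = _ := integral_ofReal

lemma phiC_eq_phiR {φC : ℂ → ℂ}
    (hrepC : ∀ z : ℂ, 0 ≤ z.re →
      φC z = (m : ℂ) + (σ2 : ℂ) * z + ∫ y, (1 - Complex.exp (-(z * (y : ℂ)))) ∂μ)
    {x : ℝ} (hx : 0 ≤ x) : φC (x : ℂ) = ((phiR m σ2 μ x : ℝ) : ℂ) := by
  rw [hrepC x (by simpa using hx), intgl_ofReal_eq]
  unfold phiR
  push_cast
  ring

lemma hasDerivAt_phiC (hμ0 : μ (Set.Iic 0) = 0) (hμint : Integrable (fun y : ℝ => min 1 y) μ)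
    {φC : ℂ → ℂ}
    (hrepC : ∀ z : ℂ, 0 ≤ z.re →
      φC z = (m : ℂ) + (σ2 : ℂ) * z + ∫ y, (1 - Complex.exp (-(z * (y : ℂ)))) ∂μ)
    {x : ℝ} (hx : 0 < x) :
    HasDerivAt φC ((phiD σ2 μ x : ℝ) : ℂ) (x : ℂ) := by
  have hball : ∀ z ∈ Metric.ball (x:ℂ) (x/2), x/2 ≤ z.re := by
    intro z hz
    rw [Metric.mem_ball, Complex.dist_eq] at hz
    have h1 : |(z - (x:ℂ)).re| ≤ ‖z - (x:ℂ)‖ := Complex.abs_re_le_norm _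
    have h2 : (z - (x:ℂ)).re = z.re - x := by simp
    rw [h2] at h1
    have := abs_le.1 h1
    linarith [this.1]
  have hdiff : ∀ y : ℝ, ∀ z ∈ Metric.ball (x:ℂ) (x/2),
      HasDerivAt (fun w : ℂ => 1 - Complex.exp (-(w * y))) ((y:ℂ) * Complex.exp (-(z * y))) z := by
    intro y z _
    have h1 : HasDerivAt (fun w : ℂ => -(w * y)) (-(y:ℂ)) z := by
      simpa using ((hasDerivAt_id z).mul_const (y:ℂ)).fun_neg
    have h2 := h1.cexp
    have h3 := (hasDerivAt_const z (1:ℂ)).fun_sub h2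
    refine h3.congr_deriv ?_
    ring
  have hbd : ∀ᵐ (y : ℝ) ∂μ, ∀ z ∈ Metric.ball (x:ℂ) (x/2),
      ‖(y:ℂ) * Complex.exp (-(z * y))‖ ≤ (1 + 2/x) * min 1 y := by
    filter_upwards [ae_pos hμ0] with y hy
    intro z hz
    have hre : ((z * (y:ℂ)).re) = z.re * y := by
      rw [Complex.mul_re]; simp
    have h1 : ‖(y:ℂ) * Complex.exp (-(z * y))‖ = y * Real.exp (-(z.re * y)) := by
      rw [norm_mul, Complex.norm_real, Real.norm_eq_abs, _root_.abs_of_pos hy,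
        Complex.norm_exp]
      simp [hre]
    rw [h1]
    have h2 : y * Real.exp (-(z.re * y)) ≤ y * Real.exp (-((x/2) * y)) := by
      have hmono : -(z.re * y) ≤ -((x/2) * y) := by nlinarith [hball z hz]
      exact mul_le_mul_of_nonneg_left (Real.exp_le_exp.2 hmono) hy.le
    refine h2.trans ?_
    have := bound2 (c := x/2) (by positivity) hy
    calc y * Real.exp (-(x/2 * y)) ≤ (1 + 1/(x/2)) * min 1 y := this
    _ = (1 + 2/x) * min 1 y := by rw [one_div_div]
  have hkey := hasDerivAt_integral_of_dominated_loc_of_deriv_le (μ := μ)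
    (F := fun (z:ℂ) (y:ℝ) => 1 - Complex.exp (-(z * y)))
    (F' := fun (z:ℂ) (y:ℝ) => (y:ℂ) * Complex.exp (-(z * y)))
    (x₀ := (x:ℂ)) (s := Metric.ball (x:ℂ) (x/2)) (bound := fun y => (1 + 2/x) * min 1 y)
    (Metric.ball_mem_nhds _ (by positivity))
    (Eventually.of_forall fun z => ((by fun_prop : Continuous fun y : ℝ =>
        1 - Complex.exp (-(z * y))).aestronglyMeasurable))
    (intC1 hμ0 hμint (by simpa using hx.le))
    ((by fun_prop : Continuous fun y : ℝ =>
        (y:ℂ) * Complex.exp (-((x:ℂ) * y))).aestronglyMeasurable)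
    hbd ((hμint.const_mul _)) (Eventually.of_forall fun y => hdiff y)
  -- assemble full derivative
  have hF : HasDerivAt (fun z : ℂ => (m:ℂ) + (σ2:ℂ) * z + ∫ y, (1 - Complex.exp (-(z * y))) ∂μ)
      ((σ2:ℂ) + ∫ y, ((y:ℂ) * Complex.exp (-((x:ℂ) * y))) ∂μ) (x:ℂ) := by
    have h1 : HasDerivAt (fun z : ℂ => (m:ℂ) + (σ2:ℂ) * z) ((σ2:ℂ)) (x:ℂ) := by
      simpa using (hasDerivAt_const ((x:ℂ)) (m:ℂ)).fun_add ((hasDerivAt_id ((x:ℂ))).const_mul (σ2:ℂ))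
    exact h1.add hkey.2
  have heq : ((phiD σ2 μ x : ℝ) : ℂ) = (σ2:ℂ) + ∫ y, ((y:ℂ) * Complex.exp (-((x:ℂ) * y))) ∂μ := by
    rw [intgl2_ofReal_eq]
    unfold phiD
    push_cast
    ring
  rw [heq]
  have hopen : IsOpen {z : ℂ | 0 < z.re} := isOpen_lt continuous_const Complex.continuous_re
  have hmem : (x:ℂ) ∈ {z : ℂ | 0 < z.re} := by simpa using hx
  have hev : φC =ᶠ[nhds (x:ℂ)] (fun z : ℂ => (m:ℂ) + (σ2:ℂ) * z + ∫ y, (1 - Complex.exp (-(z * y))) ∂μ) := by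
    filter_upwards [hopen.mem_nhds hmem] with z hz
    exact hrepC z (le_of_lt hz)
  exact hF.congr_of_eventuallyEq hev

lemma integral_one_sub_exp_nonneg (hμ0 : μ (Set.Iic 0) = 0) {x : ℝ} (hx : 0 < x) :
    0 ≤ ∫ y, (1 - Real.exp (-(x * y))) ∂μ := by
  refine integral_nonneg_of_ae ?_
  filter_upwards [ae_pos hμ0] with y hy
  have : Real.exp (-(x * y)) ≤ 1 := Real.exp_le_one_iff.2 (by nlinarith)
  simp only [Pi.zero_apply]
  linarith

lemma phiR_pos (hμ0 : μ (Set.Iic 0) = 0) (hμint : Integrable (fun y : ℝ => min 1 y) μ)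
    (hm : 0 ≤ m) (hσ : 0 ≤ σ2) (hnd : ¬ (m = 0 ∧ σ2 = 0 ∧ μ = 0))
    {x : ℝ} (hx : 0 < x) : 0 < phiR m σ2 μ x := by
  have hI := integral_one_sub_exp_nonneg hμ0 hx
  rcases lt_or_ge 0 (phiR m σ2 μ x) with h | h
  · exact h
  exfalso
  unfold phiR at h
  have hm0 : m = 0 := by nlinarith
  have hσ0 : σ2 = 0 := by nlinarith
  have hI0 : ∫ y, (1 - Real.exp (-(x * y))) ∂μ = 0 := by nlinarith
  have hae : (fun y => 1 - Real.exp (-(x * y))) =ᵐ[μ] 0 := by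
    refine (integral_eq_zero_iff_of_nonneg_ae ?_ (intR1 hμ0 hμint hx)).1 hI0
    filter_upwards [ae_pos hμ0] with y hy
    have : Real.exp (-(x * y)) ≤ 1 := Real.exp_le_one_iff.2 (by nlinarith)
    simp only [Pi.zero_apply]
    linarith
  have hfalse : ∀ᵐ (y : ℝ) ∂μ, False := by
    filter_upwards [ae_pos hμ0, hae] with y hy h0
    simp only [Pi.zero_apply] at h0
    have h1 : Real.exp (-(x * y)) = 1 := by linarith
    have h2 : -(x * y) = 0 := (Real.exp_eq_one_iff _).1 h1
    nlinarith
  have hμz : μ = 0 := by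
    have := hfalse
    rw [ae_iff] at this
    simp only [not_false_iff] at this
    simpa [Measure.measure_univ_eq_zero] using this
  exact hnd ⟨hm0, hσ0, hμz⟩

lemma phiR_mono (hμ0 : μ (Set.Iic 0) = 0) (hμint : Integrable (fun y : ℝ => min 1 y) μ)
    (hσ : 0 ≤ σ2) {x1 x2 : ℝ} (h1 : 0 < x1) (h12 : x1 ≤ x2) :
    phiR m σ2 μ x1 ≤ phiR m σ2 μ x2 := by
  unfold phiR
  have hi : (∫ y, (1 - Real.exp (-(x1 * y))) ∂μ) ≤ ∫ y, (1 - Real.exp (-(x2 * y))) ∂μ := by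
    refine integral_mono_ae (intR1 hμ0 hμint h1) (intR1 hμ0 hμint (h1.trans_le h12)) ?_
    filter_upwards [ae_pos hμ0] with y hy
    have : Real.exp (-(x2 * y)) ≤ Real.exp (-(x1 * y)) := Real.exp_le_exp.2 (by nlinarith)
    linarith
  nlinarith

lemma phiD_nonneg (hμ0 : μ (Set.Iic 0) = 0) (hσ : 0 ≤ σ2) (x : ℝ) :
    0 ≤ phiD σ2 μ x := by
  unfold phiD
  have : 0 ≤ ∫ y, y * Real.exp (-(x * y)) ∂μ := by
    refine integral_nonneg_of_ae ?_
    filter_upwards [ae_pos hμ0] with y hy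
    simp only [Pi.zero_apply]
    positivity
  linarith

lemma phiD_anti (hμ0 : μ (Set.Iic 0) = 0) (hμint : Integrable (fun y : ℝ => min 1 y) μ)
    {x1 x2 : ℝ} (h1 : 0 < x1) (h12 : x1 ≤ x2) :
    phiD σ2 μ x2 ≤ phiD σ2 μ x1 := by
  unfold phiD
  have hi : (∫ y, y * Real.exp (-(x2 * y)) ∂μ) ≤ ∫ y, y * Real.exp (-(x1 * y)) ∂μ := by
    refine integral_mono_ae (intR2 hμ0 hμint (h1.trans_le h12)) (intR2 hμ0 hμint h1) ?_
    filter_upwards [ae_pos hμ0] with y hy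
    have : Real.exp (-(x2 * y)) ≤ Real.exp (-(x1 * y)) := Real.exp_le_exp.2 (by nlinarith)
    nlinarith
  linarith

lemma mul_phiD_le_phiR (hμ0 : μ (Set.Iic 0) = 0) (hμint : Integrable (fun y : ℝ => min 1 y) μ)
    (hm : 0 ≤ m) {x : ℝ} (hx : 0 < x) :
    x * phiD σ2 μ x ≤ phiR m σ2 μ x := by
  unfold phiD phiR
  rw [mul_add, ← integral_const_mul]
  have hi : (∫ y, x * (y * Real.exp (-(x * y))) ∂μ) ≤ ∫ y, (1 - Real.exp (-(x * y))) ∂μ := by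
    refine integral_mono_ae ((intR2 hμ0 hμint hx).const_mul x) (intR1 hμ0 hμint hx) ?_
    filter_upwards [ae_pos hμ0] with y hy
    have h1 : x * y + 1 ≤ Real.exp (x * y) := Real.add_one_le_exp _
    have h2 : (0:ℝ) < Real.exp (x * y) := Real.exp_pos _
    have h3 : Real.exp (-(x*y)) = (Real.exp (x*y))⁻¹ := Real.exp_neg _
    rw [h3]
    have h4 : (x * y + 1) * (Real.exp (x*y))⁻¹ ≤ 1 := by
      rw [← div_eq_mul_inv, div_le_one h2]
      linarith
    have h5 : x * (y * (Real.exp (x*y))⁻¹) = (x * y) * (Real.exp (x*y))⁻¹ := by ring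
    rw [h5]
    have h6 : (x*y) * (Real.exp (x*y))⁻¹ + (Real.exp (x*y))⁻¹ ≤ 1 := by
      calc (x*y) * (Real.exp (x*y))⁻¹ + (Real.exp (x*y))⁻¹
          = (x * y + 1) * (Real.exp (x*y))⁻¹ := by ring
      _ ≤ 1 := h4
    linarith
  nlinarith

lemma key_identity (hμ0 : μ (Set.Iic 0) = 0) (hμint : Integrable (fun y : ℝ => min 1 y) μ)
    {φC : ℂ → ℂ}
    (hrepC : ∀ z : ℂ, 0 ≤ z.re →
      φC z = (m : ℂ) + (σ2 : ℂ) * z + ∫ y, (1 - Complex.exp (-(z * (y : ℂ)))) ∂μ)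
    {x : ℝ} (hx : 0 < x) (b : ℝ) :
    φC ((x:ℂ) + (b:ℂ) * I) - φC (x:ℂ) - ((b:ℂ) * I) * ((phiD σ2 μ x : ℝ) : ℂ)
      = ∫ y, Complex.exp (-((x:ℂ) * y)) * (1 - Complex.exp (-((b:ℂ) * y * I)) - (b:ℂ) * y * I) ∂μ := by
  have hzre : (0:ℝ) ≤ ((x:ℂ) + (b:ℂ) * I).re := by simp [hx.le]
  have e1 := hrepC ((x:ℂ) + (b:ℂ) * I) hzre
  have e2 := hrepC (x:ℂ) (by simpa using hx.le)
  have hint1 : Integrable (fun y : ℝ => 1 - Complex.exp (-(((x:ℂ) + (b:ℂ)*I) * y))) μ :=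
    intC1 hμ0 hμint hzre
  have hint2 : Integrable (fun y : ℝ => 1 - Complex.exp (-((x:ℂ) * y))) μ :=
    intC1 hμ0 hμint (by simpa using hx.le)
  have hint3 : Integrable (fun y : ℝ => ((b:ℂ) * I) * ((y:ℂ) * Complex.exp (-((x:ℂ) * y)))) μ :=
    (intC2 hμ0 hμint hx).const_mul _
  have e3 : ((b:ℂ) * I) * ((phiD σ2 μ x : ℝ) : ℂ)
      = ((b:ℂ) * I) * (σ2:ℂ) + ∫ y, ((b:ℂ) * I) * ((y:ℂ) * Complex.exp (-((x:ℂ) * y))) ∂μ := by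
    rw [integral_const_mul]
    rw [intgl2_ofReal_eq]
    unfold phiD
    push_cast
    ring
  rw [e1, e2, e3]
  have hc : ∀ q1 q2 q3 q4 : ℂ, ((m:ℂ) + (σ2:ℂ) * ((x:ℂ) + (b:ℂ)*I) + q1) - ((m:ℂ) + (σ2:ℂ)*(x:ℂ) + q2)
      - ((b:ℂ) * I * (σ2:ℂ) + q3) = q4 ↔ q1 - q2 - q3 = q4 := by
    intro q1 q2 q3 q4
    constructor
    · intro h; rw [← h]; ring
    · intro h; rw [← h]; ring
  rw [hc]
  have hint12 : Integrable (fun y : ℝ => (1 - Complex.exp (-(((x:ℂ) + (b:ℂ)*I) * y)))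
      - (1 - Complex.exp (-((x:ℂ) * y)))) μ := hint1.sub hint2
  rw [← integral_sub hint1 hint2, ← integral_sub hint12 hint3]
  congr 1
  funext y
  have hsplit : Complex.exp (-(((x:ℂ) + (b:ℂ)*I) * y))
      = Complex.exp (-((x:ℂ) * y)) * Complex.exp (-((b:ℂ) * y * I)) := by
    rw [← Complex.exp_add]
    congr 1
    ring
  rw [hsplit]
  ring

lemma re_phiC_ge (hμ0 : μ (Set.Iic 0) = 0) (hμint : Integrable (fun y : ℝ => min 1 y) μ)
    {φC : ℂ → ℂ}
    (hrepC : ∀ z : ℂ, 0 ≤ z.re →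
      φC z = (m : ℂ) + (σ2 : ℂ) * z + ∫ y, (1 - Complex.exp (-(z * (y : ℂ)))) ∂μ)
    {x : ℝ} (hx : 0 < x) (b : ℝ) :
    phiR m σ2 μ x ≤ (φC ((x:ℂ) + (b:ℂ) * I)).re := by
  have hzre : (0:ℝ) ≤ ((x:ℂ) + (b:ℂ) * I).re := by simp [hx.le]
  have hint1 : Integrable (fun y : ℝ => 1 - Complex.exp (-(((x:ℂ) + (b:ℂ)*I) * y))) μ :=
    intC1 hμ0 hμint hzre
  rw [hrepC _ hzre]
  have hre : ((m:ℂ) + (σ2:ℂ) * ((x:ℂ) + (b:ℂ)*I)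
      + ∫ y, (1 - Complex.exp (-(((x:ℂ) + (b:ℂ)*I) * y))) ∂μ).re
      = m + σ2 * x + (∫ y, (1 - Complex.exp (-(((x:ℂ) + (b:ℂ)*I) * y))) ∂μ).re := by
    simp [Complex.add_re, Complex.mul_re]
  rw [hre]
  have hIre : (∫ y, (1 - Complex.exp (-(((x:ℂ) + (b:ℂ)*I) * y))) ∂μ).re
      = ∫ y, (1 - Complex.exp (-(((x:ℂ) + (b:ℂ)*I) * y))).re ∂μ := by
    rw [← RCLike.re_to_complex]
    rw [← integral_re hint1]
    simp
  rw [hIre]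
  unfold phiR
  have hcomp : (∫ y, (1 - Real.exp (-(x * y))) ∂μ)
      ≤ ∫ y, (1 - Complex.exp (-(((x:ℂ) + (b:ℂ)*I) * y))).re ∂μ := by
    refine integral_mono_ae (intR1 hμ0 hμint hx) ?_ ?_
    · have := hint1.re
      simpa using this
    · filter_upwards [ae_pos hμ0] with y hy
      have harg : (-(((x:ℂ) + (b:ℂ)*I) * y)).re = -(x * y) := by
        simp [Complex.mul_re]
      have harg2 : (-(((x:ℂ) + (b:ℂ)*I) * y)).im = -(b * y) := by
        simp [Complex.mul_im]
      have : (1 - Complex.exp (-(((x:ℂ) + (b:ℂ)*I) * y))).re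
          = 1 - Real.exp (-(x * y)) * Real.cos (-(b * y)) := by
        rw [Complex.sub_re, Complex.exp_re, harg, harg2]
        simp
      rw [this]
      have hc : Real.cos (-(b * y)) ≤ 1 := Real.cos_le_one _
      have he : (0:ℝ) < Real.exp (-(x * y)) := Real.exp_pos _
      nlinarith
  linarith

lemma norm_phiC_ge (hμ0 : μ (Set.Iic 0) = 0) (hμint : Integrable (fun y : ℝ => min 1 y) μ)
    {φC : ℂ → ℂ}
    (hrepC : ∀ z : ℂ, 0 ≤ z.re →
      φC z = (m : ℂ) + (σ2 : ℂ) * z + ∫ y, (1 - Complex.exp (-(z * (y : ℂ)))) ∂μ)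
    {x : ℝ} (hx : 0 < x) (b : ℝ) :
    phiR m σ2 μ x ≤ ‖φC ((x:ℂ) + (b:ℂ) * I)‖ := by
  refine (re_phiC_ge hμ0 hμint hrepC hx b).trans ?_
  exact Complex.re_le_norm _

lemma geom_bound {y : ℝ} (hy : 0 < y) (n : ℕ) :
    ∑ k ∈ Finset.range n, Real.exp (-(((k:ℝ)+1) * y)) ≤ 1 / y := by
  set r : ℝ := Real.exp (-y) with hr
  have hr0 : 0 < r := Real.exp_pos _
  have hr1 : r < 1 := by
    rw [hr, Real.exp_lt_one_iff]
    linarith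
  have hterm : ∀ k : ℕ, Real.exp (-(((k:ℝ)+1) * y)) = r ^ (k+1) := by
    intro k
    rw [hr, ← Real.exp_nat_mul]
    congr 1
    push_cast
    ring
  have hsum : ∑ k ∈ Finset.range n, Real.exp (-(((k:ℝ)+1) * y))
      = r * ∑ k ∈ Finset.range n, r ^ k := by
    rw [Finset.mul_sum]
    refine Finset.sum_congr rfl fun k _ => ?_
    rw [hterm k, pow_succ]
    ring
  rw [hsum]
  have hgeo : ∑ k ∈ Finset.range n, r ^ k ≤ (1 - r)⁻¹ := by
    refine Summable.sum_le_tsum (L := SummationFilter.unconditional ℕ) (Finset.range n) (fun i _ => by positivity) ?_ |>.trans_eq ?_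
    · exact summable_geometric_of_lt_one hr0.le hr1
    · exact tsum_geometric_of_lt_one hr0.le hr1
  have h1r : 0 < 1 - r := by linarith
  have hre : r * Real.exp y = 1 := by
    rw [hr, ← Real.exp_add]
    simp
  calc r * ∑ k ∈ Finset.range n, r ^ k ≤ r * (1 - r)⁻¹ := by
        exact mul_le_mul_of_nonneg_left hgeo hr0.le
  _ = r / (1 - r) := by rw [div_eq_mul_inv]
  _ ≤ 1 / y := by
      rw [div_le_div_iff₀ h1r hy]
      nlinarith [Real.add_one_le_exp y]

lemma nE_rewrite (b y : ℝ) :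
    (1:ℂ) - Complex.exp (-((b:ℂ) * y * I)) - (b:ℂ) * y * I
      = -(Complex.exp ((((-(b*y)):ℝ):ℂ) * I) - 1 - (((-(b*y)):ℝ):ℂ) * I) := by
  have harg : -((b:ℂ) * y * I) = (((-(b*y)):ℝ):ℂ) * I := by push_cast; ring
  rw [harg]
  push_cast
  ring

lemma nE_bound {b y : ℝ} (hy : 0 < y) :
    ‖(1:ℂ) - Complex.exp (-((b:ℂ) * y * I)) - (b:ℂ) * y * I‖
      ≤ (3*b^2 + 3*|b|) * (y * min 1 y) := by
  rw [nE_rewrite, norm_neg]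
  set t : ℝ := -(b*y) with ht
  have habs : |t| = |b| * y := by
    rw [ht, abs_neg, abs_mul, _root_.abs_of_pos hy]
  rcases le_or_gt (|b| * y) 1 with h | h
  · have := key1a (t := t) (by rw [habs]; exact h)
    refine this.trans ?_
    have ht2 : t^2 = b^2 * y^2 := by rw [ht]; ring
    rw [ht2]
    rcases le_or_gt y 1 with h2 | h2
    · rw [min_eq_right h2]
      nlinarith [sq_nonneg b, abs_nonneg b]
    · rw [min_eq_left h2.le]
      have hb2 : b^2 * y ≤ |b| := by
        nlinarith [_root_.sq_abs b, abs_nonneg b]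
      nlinarith [abs_nonneg b, sq_nonneg b]
  · have := key1b t
    refine this.trans ?_
    rw [habs]
    rcases le_or_gt y 1 with h2 | h2
    · rw [min_eq_right h2]
      have h3 : (1:ℝ) < |b| * y := h
      have h4 : 2 + |b| * y ≤ 3 * (|b| * y) := by linarith
      refine h4.trans ?_
      have h5 : 3 * (|b| * y) ≤ 3 * b^2 * (y * y) := by
        nlinarith [_root_.sq_abs b, abs_nonneg b, hy.le]
      nlinarith [abs_nonneg b, hy.le]
    · rw [min_eq_left h2.le]
      have h4 : 2 + |b| * y ≤ 3 * (|b| * y) := by linarith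
      refine h4.trans ?_
      nlinarith [abs_nonneg b, sq_nonneg b, hy.le]

lemma summable_telescope (gg : ℝ → ℝ) (hnn : ∀ x : ℝ, 0 < x → 0 ≤ gg x)
    (hanti : ∀ x1 x2 : ℝ, 0 < x1 → x1 ≤ x2 → gg x2 ≤ gg x1) {a : ℝ} (ha : 0 < a) :
    Summable (fun k : ℕ => gg ((k:ℝ)+1) - gg ((k:ℝ)+1+a)) := by
  set N := ⌈a⌉₊ with hN
  have haN : a ≤ (N:ℝ) := Nat.le_ceil a
  set f : ℕ → ℝ := fun k => gg ((k:ℝ)+1) with hf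
  set d : ℕ → ℝ := fun k => f k - f (k+1) with hd
  have hd0 : ∀ k, 0 ≤ d k := by
    intro k
    refine sub_nonneg.2 (hanti _ _ (by positivity) ?_)
    push_cast
    linarith
  have hsum_d : Summable d := by
    refine summable_of_sum_range_le hd0 (c := f 0) fun n => ?_
    rw [Finset.sum_range_sub' f n]
    have : 0 ≤ f n := hnn _ (by positivity)
    linarith
  have hshift : ∀ j : ℕ, Summable fun k => d (k+j) :=
    fun j => (summable_nat_add_iff j).2 hsum_d
  have hS : Summable (fun k : ℕ => ∑ j ∈ Finset.range N, d (k+j)) :=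
    summable_sum fun j _ => hshift j
  refine Summable.of_nonneg_of_le ?_ ?_ hS
  · intro k
    refine sub_nonneg.2 (hanti _ _ (by positivity) (by linarith))
  · intro k
    have h2 : ∑ j ∈ Finset.range N, d (k+j) = gg ((k:ℝ)+1) - gg ((k:ℝ)+1+N) := by
      have hdf : ∀ j : ℕ, d (k+j) = (fun j : ℕ => gg ((k:ℝ)+1+j)) j - (fun j : ℕ => gg ((k:ℝ)+1+j)) (j+1) := by
        intro j
        simp only [hd, hf]
        push_cast
        ring_nf
      rw [Finset.sum_congr rfl fun j _ => hdf j, Finset.sum_range_sub' (fun j : ℕ => gg ((k:ℝ)+1+j)) N]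
      push_cast
      ring_nf
    rw [h2]
    have h1 : gg ((k:ℝ)+1+N) ≤ gg ((k:ℝ)+1+a) := hanti _ _ (by positivity) (by linarith)
    linarith

lemma intC3 (hμ0 : μ (Set.Iic 0) = 0) (hμint : Integrable (fun y : ℝ => min 1 y) μ)
    {x : ℝ} (hx : 0 < x) (b : ℝ) :
    Integrable (fun y : ℝ => Complex.exp (-((x:ℂ) * y))
      * (1 - Complex.exp (-((b:ℂ) * y * I)) - (b:ℂ) * y * I)) μ := by
  have hzre : (0:ℝ) ≤ ((x:ℂ) + (b:ℂ) * I).re := by simp [hx.le]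
  have h := (((intC1 hμ0 hμint hzre).sub (intC1 hμ0 hμint
      (show (0:ℝ) ≤ ((x:ℝ):ℂ).re by simpa using hx.le))).sub
      ((intC2 hμ0 hμint hx).const_mul ((b:ℂ)*I)))
  refine h.congr (Eventually.of_forall fun y => ?_)
  have hsplit : Complex.exp (-(((x:ℂ) + (b:ℂ)*I) * y))
      = Complex.exp (-((x:ℂ) * y)) * Complex.exp (-((b:ℂ) * y * I)) := by
    rw [← Complex.exp_add]
    congr 1
    ring
  simp only [Pi.sub_apply]
  rw [hsplit]
  ring

lemma norm_prod_eq (x b y : ℝ) :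
    ‖Complex.exp (-((x:ℂ) * y)) * (1 - Complex.exp (-((b:ℂ) * y * I)) - (b:ℂ) * y * I)‖
      = Real.exp (-(x * y)) * ‖(1:ℂ) - Complex.exp (-((b:ℂ) * y * I)) - (b:ℂ) * y * I‖ := by
  rw [norm_mul]
  congr 1
  rw [Complex.norm_exp]
  congr 1
  simp [Complex.mul_re]

lemma intI (hμ0 : μ (Set.Iic 0) = 0) (hμint : Integrable (fun y : ℝ => min 1 y) μ)
    {x : ℝ} (hx : 0 < x) (b : ℝ) :
    Integrable (fun y : ℝ => Real.exp (-(x * y))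
      * ‖(1:ℂ) - Complex.exp (-((b:ℂ) * y * I)) - (b:ℂ) * y * I‖) μ := by
  refine (intC3 hμ0 hμint hx b).norm.congr (Eventually.of_forall fun y => ?_)
  exact norm_prod_eq x b y

lemma summable_Ik (hμ0 : μ (Set.Iic 0) = 0) (hμint : Integrable (fun y : ℝ => min 1 y) μ)
    {a : ℝ} (ha : 0 < a) (b : ℝ) :
    Summable (fun k : ℕ => ∫ y, Real.exp (-((a+(k:ℝ)+1) * y))
      * ‖(1:ℂ) - Complex.exp (-((b:ℂ) * y * I)) - (b:ℂ) * y * I‖ ∂μ) := by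
  set Cb : ℝ := 3*b^2 + 3*|b| with hCb
  have hint_k : ∀ k : ℕ, Integrable (fun y : ℝ => Real.exp (-((a+(k:ℝ)+1) * y))
      * ‖(1:ℂ) - Complex.exp (-((b:ℂ) * y * I)) - (b:ℂ) * y * I‖) μ :=
    fun k => intI hμ0 hμint (by positivity) b
  refine summable_of_sum_range_le (c := ∫ y, Cb * min 1 y ∂μ)
    (fun k => integral_nonneg fun y => by positivity) (fun n => ?_)
  rw [← integral_finset_sum _ (fun k _ => hint_k k)]
  refine integral_mono_ae (integrable_finset_sum _ (fun k _ => hint_k k))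
    (hμint.const_mul Cb) ?_
  filter_upwards [ae_pos hμ0] with y hy
  have hsum_eq : ∑ k ∈ Finset.range n, Real.exp (-((a+(k:ℝ)+1) * y))
        * ‖(1:ℂ) - Complex.exp (-((b:ℂ) * y * I)) - (b:ℂ) * y * I‖
      = (∑ k ∈ Finset.range n, Real.exp (-((a+(k:ℝ)+1) * y)))
        * ‖(1:ℂ) - Complex.exp (-((b:ℂ) * y * I)) - (b:ℂ) * y * I‖ := by
    rw [Finset.sum_mul]
  rw [hsum_eq]
  have hs1 : ∑ k ∈ Finset.range n, Real.exp (-((a+(k:ℝ)+1) * y)) ≤ 1 / y := by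
    refine le_trans (Finset.sum_le_sum fun k _ => ?_) (geom_bound hy n)
    exact Real.exp_le_exp.2 (by nlinarith)
  have hs2 := nE_bound (b := b) hy
  calc (∑ k ∈ Finset.range n, Real.exp (-((a+(k:ℝ)+1) * y)))
        * ‖(1:ℂ) - Complex.exp (-((b:ℂ) * y * I)) - (b:ℂ) * y * I‖
      ≤ (1/y) * (Cb * (y * min 1 y)) := by
        refine mul_le_mul hs1 hs2 (norm_nonneg _) (by positivity)
  _ = Cb * min 1 y := by field_simp

lemma main_bound (hμ0 : μ (Set.Iic 0) = 0) (hμint : Integrable (fun y : ℝ => min 1 y) μ)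
    (hm : 0 ≤ m) (hσ : 0 ≤ σ2) (hnd : ¬ (m = 0 ∧ σ2 = 0 ∧ μ = 0))
    {φC : ℂ → ℂ}
    (hrepC : ∀ z : ℂ, 0 ≤ z.re →
      φC z = (m : ℂ) + (σ2 : ℂ) * z + ∫ y, (1 - Complex.exp (-(z * (y : ℂ)))) ∂μ)
    {xk x δ : ℝ} (hxk1 : 1 ≤ xk) (hkx : xk ≤ x) (b : ℝ)
    (hδ : 0 < δ) (hδle : δ ≤ phiR m σ2 μ x) :
    ‖φC ((x:ℂ) + (b:ℂ) * I) / φC (x:ℂ)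
        * Complex.exp (-((((b * (phiD σ2 μ xk / phiR m σ2 μ xk) : ℝ)) : ℂ) * I)) - 1‖
      ≤ (2+|b|) * (b^2 / xk^2)
        + (∫ y, Real.exp (-(x * y)) * ‖(1:ℂ) - Complex.exp (-((b:ℂ) * y * I)) - (b:ℂ) * y * I‖ ∂μ) / δ
        + |b| * ((phiD σ2 μ xk / phiR m σ2 μ xk) - (phiD σ2 μ x / phiR m σ2 μ x)) := by
  have hxk : (0:ℝ) < xk := lt_of_lt_of_le one_pos hxk1
  have hx0 : (0:ℝ) < x := lt_of_lt_of_le hxk hkx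
  set P : ℝ := phiR m σ2 μ x with hPdef
  have hP : 0 < P := phiR_pos hμ0 hμint hm hσ hnd hx0
  set θ : ℝ := b * (phiD σ2 μ xk / phiR m σ2 μ xk) with hθdef
  set Ik : ℝ := ∫ y, Real.exp (-(x * y))
      * ‖(1:ℂ) - Complex.exp (-((b:ℂ) * y * I)) - (b:ℂ) * y * I‖ ∂μ with hIkdef
  have hIk0 : 0 ≤ Ik := integral_nonneg fun y => by positivity
  set qk : ℝ := phiD σ2 μ xk / phiR m σ2 μ xk with hqkdef
  set qx : ℝ := phiD σ2 μ x / phiR m σ2 μ x with hqxdef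
  have hPz : φC (x:ℂ) = ((P:ℝ):ℂ) := phiC_eq_phiR hrepC hx0.le
  rw [hPz, show -((θ:ℂ) * I) = -(θ:ℂ) * I from (neg_mul _ _).symm]
  have hA : φC ((x:ℂ)+(b:ℂ)*I) / ((P:ℝ):ℂ) * Complex.exp (-(θ:ℂ)*I) - 1
      = Complex.exp (-(θ:ℂ)*I) * (φC ((x:ℂ)+(b:ℂ)*I) / ((P:ℝ):ℂ) - Complex.exp ((θ:ℂ)*I)) := by
    have hee : Complex.exp (-(θ:ℂ)*I) * Complex.exp ((θ:ℂ)*I) = 1 := by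
      rw [← Complex.exp_add, show (-(θ:ℂ)*I) + (θ:ℂ)*I = 0 by ring, Complex.exp_zero]
    rw [mul_sub, hee]
    ring
  rw [hA, norm_mul]
  have hne : ‖Complex.exp (-(θ:ℂ)*I)‖ = 1 := by
    rw [Complex.norm_exp]
    simp
  rw [hne, one_mul]
  have hB : φC ((x:ℂ)+(b:ℂ)*I) / ((P:ℝ):ℂ) - Complex.exp ((θ:ℂ)*I)
      = (φC ((x:ℂ)+(b:ℂ)*I) / ((P:ℝ):ℂ) - 1 - (θ:ℂ)*I)
        - (Complex.exp ((θ:ℂ)*I) - 1 - (θ:ℂ)*I) := by ring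
  rw [hB]
  refine (norm_sub_le _ _).trans ?_
  -- bound on exponential part
  have hRk : 0 < phiR m σ2 μ xk := phiR_pos hμ0 hμint hm hσ hnd hxk
  have hqknn : 0 ≤ qk := div_nonneg (phiD_nonneg hμ0 hσ xk) hRk.le
  have hqkle : qk ≤ 1 / xk := by
    rw [hqkdef, div_le_div_iff₀ hRk hxk]
    have := mul_phiD_le_phiR (σ2 := σ2) hμ0 hμint hm hxk
    nlinarith
  have hθabs : |θ| ≤ |b| / xk := by
    rw [hθdef, abs_mul, _root_.abs_of_nonneg hqknn]
    calc |b| * qk ≤ |b| * (1/xk) := mul_le_mul_of_nonneg_left hqkle (abs_nonneg b)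
    _ = |b| / xk := by ring
  have hθ2 : θ^2 ≤ b^2 / xk^2 := by
    calc θ^2 = |θ|^2 := (_root_.sq_abs θ).symm
    _ ≤ (|b|/xk)^2 := pow_le_pow_left₀ (abs_nonneg θ) hθabs 2
    _ = b^2/xk^2 := by rw [div_pow, _root_.sq_abs]
  have hB2 : ‖Complex.exp ((θ:ℂ)*I) - 1 - (θ:ℂ)*I‖ ≤ (2+|b|) * (b^2/xk^2) := by
    have hb2nn : (0:ℝ) ≤ b^2/xk^2 := by positivity
    rcases le_or_gt (|θ|) 1 with h | h
    · refine (key1a h).trans ?_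
      nlinarith [abs_nonneg b]
    · refine (key1b θ).trans ?_
      have h1 : (1:ℝ) < θ^2 := by nlinarith [_root_.sq_abs θ]
      have hθb : |θ| ≤ |b| := by
        refine hθabs.trans ?_
        rw [div_le_iff₀ hxk]
        nlinarith [abs_nonneg b]
      nlinarith [abs_nonneg b]
  -- bound on the main part
  have hPne : ((P:ℝ):ℂ) ≠ 0 := Complex.ofReal_ne_zero.2 hP.ne'
  have hq : φC ((x:ℂ)+(b:ℂ)*I) / ((P:ℝ):ℂ) - 1 - (θ:ℂ)*I
      = (φC ((x:ℂ)+(b:ℂ)*I) - ((P:ℝ):ℂ) - (θ:ℂ)*((P:ℝ):ℂ)*I)/((P:ℝ):ℂ) := by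
    field_simp
  rw [hq, norm_div]
  have hPn : ‖((P:ℝ):ℂ)‖ = P := by
    rw [Complex.norm_real, Real.norm_eq_abs, _root_.abs_of_pos hP]
  rw [hPn]
  set c : ℝ := b * phiD σ2 μ x - θ * P with hcdef
  have hsplitnum : φC ((x:ℂ)+(b:ℂ)*I) - ((P:ℝ):ℂ) - (θ:ℂ)*((P:ℝ):ℂ)*I
      = (φC ((x:ℂ)+(b:ℂ)*I) - φC (x:ℂ) - ((b:ℂ)*I) * ((phiD σ2 μ x :ℝ):ℂ)) + ((c:ℝ):ℂ)*I := by
    rw [hPz, hcdef]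
    push_cast
    ring
  have hnorm1 : ‖φC ((x:ℂ)+(b:ℂ)*I) - φC (x:ℂ) - ((b:ℂ)*I) * ((phiD σ2 μ x :ℝ):ℂ)‖ ≤ Ik := by
    rw [key_identity hμ0 hμint hrepC hx0 b]
    refine (norm_integral_le_integral_norm _).trans_eq ?_
    rw [hIkdef]
    congr 1
    funext y
    exact norm_prod_eq x b y
  have hqx_le : qx ≤ qk := by
    rw [hqkdef, hqxdef]
    exact div_le_div₀ (phiD_nonneg hμ0 hσ xk) (phiD_anti hμ0 hμint hxk hkx) hRk
      (phiR_mono hμ0 hμint hσ hxk hkx)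
  have hDx : phiD σ2 μ x = qx * P := by
    rw [hqxdef, hPdef]
    exact (div_mul_cancel₀ _ hP.ne').symm
  have hcval : c = b * P * (qx - qk) := by
    rw [hcdef, hDx, hθdef, hqkdef]
    ring
  have hcabs : |c| = |b| * P * (qk - qx) := by
    rw [hcval, abs_mul, abs_mul, _root_.abs_of_pos hP, abs_sub_comm,
      _root_.abs_of_nonneg (sub_nonneg.2 hqx_le)]
  have hnormc : ‖((c:ℝ):ℂ)*I‖ = |c| := by
    rw [norm_mul, Complex.norm_real, Real.norm_eq_abs, Complex.norm_I, mul_one]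
  have hB1 : ‖φC ((x:ℂ)+(b:ℂ)*I) - ((P:ℝ):ℂ) - (θ:ℂ)*((P:ℝ):ℂ)*I‖ / P
      ≤ Ik / δ + |b| * (qk - qx) := by
    rw [hsplitnum]
    have h1 : ‖(φC ((x:ℂ)+(b:ℂ)*I) - φC (x:ℂ) - ((b:ℂ)*I) * ((phiD σ2 μ x :ℝ):ℂ)) + ((c:ℝ):ℂ)*I‖
        ≤ Ik + |b| * P * (qk - qx) := by
      refine (norm_add_le _ _).trans ?_
      rw [hnormc, hcabs]
      exact add_le_add_left hnorm1 _
    calc ‖(φC ((x:ℂ)+(b:ℂ)*I) - φC (x:ℂ) - ((b:ℂ)*I) * ((phiD σ2 μ x :ℝ):ℂ)) + ((c:ℝ):ℂ)*I‖ / P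
        ≤ (Ik + |b| * P * (qk - qx)) / P := by gcongr
    _ = Ik / P + |b| * (qk - qx) := by field_simp
    _ ≤ Ik / δ + |b| * (qk - qx) := by
        have := div_le_div_of_nonneg_left hIk0 hδ hδle
        linarith
  linarith [hB1, hB2]

end
end BWP

open MeasureTheory BWP Complex Filter in
set_option maxHeartbeats 1000000 in
theorem bernstein_weierstrass_product_convergence
    (φC : ℂ → ℂ) (m σ2 : ℝ) (μ : Measure ℝ)
    (hm : 0 ≤ m) (hσ : 0 ≤ σ2)
    (hμ0 : μ (Set.Iic 0) = 0)
    (hμint : Integrable (fun y : ℝ => min 1 y) μ)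
    (hrepC : ∀ z : ℂ, 0 ≤ z.re →
      φC z = (m : ℂ) + (σ2 : ℂ) * z + ∫ y, (1 - Complex.exp (-(z * (y : ℂ)))) ∂μ)
    (hnd : ¬ (m = 0 ∧ σ2 = 0 ∧ μ = 0)) :
    ∀ a : ℝ, 0 < a → ∀ b : ℝ,
      Summable (fun k : ℕ =>
        ‖φC (((a + (k : ℝ) + 1 : ℝ) : ℂ) + (b : ℂ) * Complex.I)
              / φC (((a + (k : ℝ) + 1 : ℝ) : ℂ))
            * Complex.exp (-(((b * ((deriv φC ((((k : ℝ) + 1 : ℝ)) : ℂ)).re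
                / (φC ((((k : ℝ) + 1 : ℝ)) : ℂ)).re) : ℝ) : ℂ) * Complex.I)) - 1‖)
      ∧ ∃ L : ℝ, 0 < L ∧
          Filter.Tendsto (fun n : ℕ => ∏ k ∈ Finset.range n,
              (φC (((a + (k : ℝ) + 1 : ℝ) : ℂ))).re
                / ‖φC (((a + (k : ℝ) + 1 : ℝ) : ℂ) + (b : ℂ) * Complex.I)‖)
            Filter.atTop (nhds L) := by
  intro a ha b
  have hposk : ∀ k : ℕ, (0:ℝ) < (k:ℝ) + 1 := fun k => by positivity
  have hposx : ∀ k : ℕ, (0:ℝ) < a + (k:ℝ) + 1 := fun k => by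
    have := Nat.cast_nonneg (α := ℝ) k; linarith
  have hval : ∀ k : ℕ, (φC ((((k : ℝ) + 1 : ℝ)) : ℂ)).re = phiR m σ2 μ ((k:ℝ)+1) := by
    intro k
    rw [phiC_eq_phiR hrepC (hposk k).le]
    simp
  have hder : ∀ k : ℕ, (deriv φC ((((k : ℝ) + 1 : ℝ)) : ℂ)).re = phiD σ2 μ ((k:ℝ)+1) := by
    intro k
    rw [(hasDerivAt_phiC hμ0 hμint hrepC (hposk k)).deriv]
    simp
  set δ : ℝ := phiR m σ2 μ (a+1) with hδdef
  have hδ : 0 < δ := phiR_pos hμ0 hμint hm hσ hnd (by linarith)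
  set gg : ℝ → ℝ := fun x => phiD σ2 μ x / phiR m σ2 μ x with hggdef
  have hggnn : ∀ x : ℝ, 0 < x → 0 ≤ gg x := fun x hx =>
    div_nonneg (phiD_nonneg hμ0 hσ x) (phiR_pos hμ0 hμint hm hσ hnd hx).le
  have hgganti : ∀ x1 x2 : ℝ, 0 < x1 → x1 ≤ x2 → gg x2 ≤ gg x1 := by
    intro x1 x2 h1 h12
    exact div_le_div₀ (phiD_nonneg hμ0 hσ x1) (phiD_anti hμ0 hμint h1 h12)
      (phiR_pos hμ0 hμint hm hσ hnd h1) (phiR_mono hμ0 hμint hσ h1 h12)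
  -- the dominating sequence
  have hsumT : Summable (fun k : ℕ => (2+|b|) * (b^2 / ((k:ℝ)+1)^2)
    + (∫ y, Real.exp (-((a+(k:ℝ)+1) * y))
        * ‖(1:ℂ) - Complex.exp (-((b:ℂ) * y * I)) - (b:ℂ) * y * I‖ ∂μ) / δ
    + |b| * ((phiD σ2 μ ((k:ℝ)+1) / phiR m σ2 μ ((k:ℝ)+1))
        - (phiD σ2 μ (a+(k:ℝ)+1) / phiR m σ2 μ (a+(k:ℝ)+1)))) := by
    have hbase : Summable (fun k : ℕ => 1/((k:ℝ)+1)^2) := by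
      have h0 : Summable (fun n : ℕ => 1/(n:ℝ)^2) :=
        Real.summable_one_div_nat_pow.2 one_lt_two
      exact ((summable_nat_add_iff 1).2 h0).congr (fun n => by push_cast; ring)
    have hsum1 : Summable (fun k : ℕ => (2+|b|) * (b^2 / ((k:ℝ)+1)^2)) :=
      (hbase.mul_left ((2+|b|)*b^2)).congr (fun k => by ring)
    have hsum2 : Summable (fun k : ℕ => (∫ y, Real.exp (-((a+(k:ℝ)+1) * y))
        * ‖(1:ℂ) - Complex.exp (-((b:ℂ) * y * I)) - (b:ℂ) * y * I‖ ∂μ) / δ) :=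
      (summable_Ik hμ0 hμint ha b).div_const δ
    have hsum3 : Summable (fun k : ℕ => |b| * ((phiD σ2 μ ((k:ℝ)+1) / phiR m σ2 μ ((k:ℝ)+1))
        - (phiD σ2 μ (a+(k:ℝ)+1) / phiR m σ2 μ (a+(k:ℝ)+1)))) := by
      refine ((summable_telescope gg hggnn hgganti ha).mul_left |b|).congr (fun k => ?_)
      simp only [hggdef]
      rw [show (k:ℝ)+1+a = a+(k:ℝ)+1 from by ring]
    exact (hsum1.add hsum2).add hsum3
  have hbound : ∀ k : ℕ,
      ‖φC (((a + (k : ℝ) + 1 : ℝ) : ℂ) + (b : ℂ) * Complex.I)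
            / φC (((a + (k : ℝ) + 1 : ℝ) : ℂ))
          * Complex.exp (-(((b * ((deriv φC ((((k : ℝ) + 1 : ℝ)) : ℂ)).re
              / (φC ((((k : ℝ) + 1 : ℝ)) : ℂ)).re) : ℝ) : ℂ) * Complex.I)) - 1‖
      ≤ (2+|b|) * (b^2 / ((k:ℝ)+1)^2)
        + (∫ y, Real.exp (-((a+(k:ℝ)+1) * y))
            * ‖(1:ℂ) - Complex.exp (-((b:ℂ) * y * I)) - (b:ℂ) * y * I‖ ∂μ) / δ
        + |b| * ((phiD σ2 μ ((k:ℝ)+1) / phiR m σ2 μ ((k:ℝ)+1))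
            - (phiD σ2 μ (a+(k:ℝ)+1) / phiR m σ2 μ (a+(k:ℝ)+1))) := by
    intro k
    rw [hder k, hval k]
    exact main_bound hμ0 hμint hm hσ hnd hrepC (xk := (k:ℝ)+1) (x := a+(k:ℝ)+1)
      (by linarith [Nat.cast_nonneg (α := ℝ) k]) (by linarith) b hδ
      (phiR_mono hμ0 hμint hσ (by linarith) (by linarith [Nat.cast_nonneg (α := ℝ) k]))
  have hsummable : Summable (fun k : ℕ =>
      ‖φC (((a + (k : ℝ) + 1 : ℝ) : ℂ) + (b : ℂ) * Complex.I)
            / φC (((a + (k : ℝ) + 1 : ℝ) : ℂ))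
          * Complex.exp (-(((b * ((deriv φC ((((k : ℝ) + 1 : ℝ)) : ℂ)).re
              / (φC ((((k : ℝ) + 1 : ℝ)) : ℂ)).re) : ℝ) : ℂ) * Complex.I)) - 1‖) :=
    Summable.of_nonneg_of_le (fun k => norm_nonneg _) hbound hsumT
  refine ⟨hsummable, ?_⟩
  -- Part 2
  set Pk : ℕ → ℝ := fun k => phiR m σ2 μ (a+(k:ℝ)+1) with hPkdef
  have hPk : ∀ k, 0 < Pk k := fun k => phiR_pos hμ0 hμint hm hσ hnd (hposx k)
  set Nk : ℕ → ℝ := fun k => ‖φC (((a + (k : ℝ) + 1 : ℝ) : ℂ) + (b : ℂ) * Complex.I)‖ with hNkdef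
  have hNge : ∀ k, Pk k ≤ Nk k := fun k => norm_phiC_ge hμ0 hμint hrepC (hposx k) b
  have hNpos : ∀ k, 0 < Nk k := fun k => lt_of_lt_of_le (hPk k) (hNge k)
  set lg : ℕ → ℝ := fun k => Real.log (Nk k / Pk k) with hlgdef
  have hratio1 : ∀ k, 1 ≤ Nk k / Pk k := fun k => (one_le_div (hPk k)).2 (hNge k)
  have hlgnn : ∀ k, 0 ≤ lg k := fun k => Real.log_nonneg (hratio1 k)
  have hphiCx : ∀ k : ℕ, φC (((a + (k : ℝ) + 1 : ℝ) : ℂ)) = ((Pk k : ℝ) : ℂ) := fun k =>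
    phiC_eq_phiR hrepC (hposx k).le
  have hlg_le : ∀ k, lg k ≤
      ‖φC (((a + (k : ℝ) + 1 : ℝ) : ℂ) + (b : ℂ) * Complex.I)
            / φC (((a + (k : ℝ) + 1 : ℝ) : ℂ))
          * Complex.exp (-(((b * ((deriv φC ((((k : ℝ) + 1 : ℝ)) : ℂ)).re
              / (φC ((((k : ℝ) + 1 : ℝ)) : ℂ)).re) : ℝ) : ℂ) * Complex.I)) - 1‖ := by
    intro k
    set w : ℂ := φC (((a + (k : ℝ) + 1 : ℝ) : ℂ) + (b : ℂ) * Complex.I)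
            / φC (((a + (k : ℝ) + 1 : ℝ) : ℂ))
          * Complex.exp (-(((b * ((deriv φC ((((k : ℝ) + 1 : ℝ)) : ℂ)).re
              / (φC ((((k : ℝ) + 1 : ℝ)) : ℂ)).re) : ℝ) : ℂ) * Complex.I)) with hwdef
    have hwnorm : ‖w‖ = Nk k / Pk k := by
      rw [hwdef, norm_mul, norm_div, hphiCx k]
      have h1 : ‖Complex.exp (-(((b * ((deriv φC ((((k : ℝ) + 1 : ℝ)) : ℂ)).re
          / (φC ((((k : ℝ) + 1 : ℝ)) : ℂ)).re) : ℝ) : ℂ) * Complex.I))‖ = 1 := by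
        rw [Complex.norm_exp]
        simp
      rw [h1, mul_one]
      congr 1
      rw [Complex.norm_real, Real.norm_eq_abs, _root_.abs_of_pos (hPk k)]
    have h2 : lg k ≤ ‖w‖ - 1 := by
      have h0 : lg k = Real.log ‖w‖ := by simp only [hlgdef]; rw [hwnorm]
      rw [h0]
      have := Real.log_le_sub_one_of_pos (x := ‖w‖) (by rw [hwnorm]; linarith [hratio1 k])
      linarith
    refine h2.trans ?_
    calc ‖w‖ - 1 = ‖w‖ - ‖(1:ℂ)‖ := by simp
    _ ≤ ‖w - 1‖ := norm_sub_norm_le _ _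
  have hlgsum : Summable lg := Summable.of_nonneg_of_le hlgnn hlg_le hsummable
  refine ⟨Real.exp (-(∑' k, lg k)), Real.exp_pos _, ?_⟩
  have hfactor : ∀ k : ℕ, (φC (((a + (k : ℝ) + 1 : ℝ) : ℂ))).re
      / ‖φC (((a + (k : ℝ) + 1 : ℝ) : ℂ) + (b : ℂ) * Complex.I)‖
      = Real.exp (-(lg k)) := by
    intro k
    have hre : (φC (((a + (k : ℝ) + 1 : ℝ) : ℂ))).re = Pk k := by
      rw [hphiCx k]; simp
    have h0 : ‖φC (((a + (k : ℝ) + 1 : ℝ) : ℂ) + (b : ℂ) * Complex.I)‖ = Nk k := by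
      simp only [hNkdef]
    have h1 : Real.exp (lg k) = Nk k / Pk k := by
      simp only [hlgdef]
      exact Real.exp_log (div_pos (hNpos k) (hPk k))
    rw [hre, h0, Real.exp_neg, h1, inv_div]
  have hprod : ∀ n : ℕ, (∏ k ∈ Finset.range n,
      (φC (((a + (k : ℝ) + 1 : ℝ) : ℂ))).re
        / ‖φC (((a + (k : ℝ) + 1 : ℝ) : ℂ) + (b : ℂ) * Complex.I)‖)
      = Real.exp (-(∑ k ∈ Finset.range n, lg k)) := by
    intro n
    rw [Finset.prod_congr rfl (fun k _ => hfactor k), ← Real.exp_sum]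
    congr 1
    rw [← Finset.sum_neg_distrib]
  have h1 : Tendsto (fun n : ℕ => ∑ k ∈ Finset.range n, lg k) atTop (nhds (∑' k, lg k)) :=
    hlgsum.hasSum.tendsto_sum_nat
  have h2 : Tendsto (fun n : ℕ => Real.exp (-(∑ k ∈ Finset.range n, lg k))) atTop
      (nhds (Real.exp (-(∑' k, lg k)))) := by
    exact (Real.continuous_exp.tendsto _).comp h1.neg
  refine h2.congr (fun n => ?_)
  rw [hprod n]
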